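/- Let G be a group given as an extension 1 → N → G → Q → 1. There is a bijective correspondence between subgroups H of G and triples (Q_H, N_H, α_H) where Q_H ≤ Q, N_H ≤ N, and α_H : Q_H → N_G(N_H)/N_H is an (injective) homomorphism such that for every q ∈ Q_H, the coset α_H(q)N_H is contained in the preimage of q under the projection G → Q. -/

import Mathlib

lemma goursat_norm_aux {G : Type*} [Group G] (N H : Subgroup G) [N.Normal] :
    H ≤ Subgroup.normalizer ((H ⊓ N : Subgroup G) : Set G) := by
  intro h hh
  rw [Subgroup.mem_normalizer_iff]
  intro n
  simp only [Subgroup.mem_inf]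
  constructor
  · rintro ⟨hn1, hn2⟩
    exact ⟨H.mul_mem (H.mul_mem hh hn1) (H.inv_mem hh),
      Subgroup.Normal.conj_mem ‹N.Normal› n hn2 h⟩
  · rintro ⟨hn1, hn2⟩
    constructor
    · have := H.mul_mem (H.mul_mem (H.inv_mem hh) hn1) hh
      simpa [mul_assoc] using this
    · have := Subgroup.Normal.conj_mem ‹N.Normal› _ hn2 h⁻¹
      simpa [mul_assoc] using this

/-- Part 2: every subgroup arises from a triple. -/
lemma goursat_part2 {G : Type*} [Group G] (N : Subgroup G) [N.Normal] (H : Subgroup G) :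
    ∃ (R' : Subgroup (G ⧸ N)) (L' : Subgroup G) (_ : L' ≤ N)
      (α' : R' →* (Subgroup.normalizer (L' : Set G)) ⧸ L'.subgroupOf (Subgroup.normalizer (L' : Set G))),
      Function.Injective α' ∧
      (∀ (q : R') (g : (Subgroup.normalizer (L' : Set G))),
        (QuotientGroup.mk g : (Subgroup.normalizer (L' : Set G)) ⧸ L'.subgroupOf (Subgroup.normalizer (L' : Set G))) = α' q →
        (QuotientGroup.mk (g : G) : G ⧸ N) = (q : G ⧸ N)) ∧
      H ⊓ N = L' ∧ Subgroup.map (QuotientGroup.mk' N) H = R' ∧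
      ∀ (q : R') (g : (Subgroup.normalizer (L' : Set G))),
        (((g : G) ∈ H) ∧ (QuotientGroup.mk (g : G) : G ⧸ N) = (q : G ⧸ N)) ↔
          (QuotientGroup.mk g : (Subgroup.normalizer (L' : Set G)) ⧸ L'.subgroupOf (Subgroup.normalizer (L' : Set G))) = α' q := by
  set L' : Subgroup G := H ⊓ N with hL'
  set R' : Subgroup (G ⧸ N) := Subgroup.map (QuotientGroup.mk' N) H with hR'
  have hnorm : H ≤ (Subgroup.normalizer (L' : Set G)) := goursat_norm_aux N H
  -- choose representatives
  have hq : ∀ q : R', ∃ g, g ∈ H ∧ (QuotientGroup.mk g : G ⧸ N) = (q : G ⧸ N) := by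
    intro q
    obtain ⟨g, hg, hgq⟩ := Subgroup.mem_map.mp q.2
    exact ⟨g, hg, hgq⟩
  choose rep hrepH hrepeq using hq
  -- well-definedness
  have W : ∀ (g g' : (Subgroup.normalizer (L' : Set G))), (g : G) ∈ H → (g' : G) ∈ H →
      (QuotientGroup.mk (g : G) : G ⧸ N) = QuotientGroup.mk (g' : G) →
      (QuotientGroup.mk g : (Subgroup.normalizer (L' : Set G)) ⧸ L'.subgroupOf (Subgroup.normalizer (L' : Set G))) =
        QuotientGroup.mk g' := by
    intro g g' hg hg' he
    rw [QuotientGroup.eq]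
    rw [Subgroup.mem_subgroupOf]
    refine ⟨H.mul_mem (H.inv_mem hg) hg', ?_⟩
    rw [QuotientGroup.eq] at he
    exact he
  set repn : R' → (Subgroup.normalizer (L' : Set G)) := fun q => ⟨rep q, hnorm (hrepH q)⟩ with hrepn
  set αf : R' → (Subgroup.normalizer (L' : Set G)) ⧸ L'.subgroupOf (Subgroup.normalizer (L' : Set G)) :=
    fun q => QuotientGroup.mk (repn q) with hαf
  have key : ∀ (q : R') (g : (Subgroup.normalizer (L' : Set G))), (g : G) ∈ H →
      (QuotientGroup.mk (g : G) : G ⧸ N) = (q : G ⧸ N) →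
      QuotientGroup.mk g = αf q := by
    intro q g hg he
    exact W g (repn q) hg (hrepH q) (by rw [he, hrepeq q])
  let α' : R' →* (Subgroup.normalizer (L' : Set G)) ⧸ L'.subgroupOf (Subgroup.normalizer (L' : Set G)) := {
    toFun := αf
    map_one' := by
      have : (QuotientGroup.mk (1 : (Subgroup.normalizer (L' : Set G))) :
          (Subgroup.normalizer (L' : Set G)) ⧸ L'.subgroupOf (Subgroup.normalizer (L' : Set G))) = αf 1 := by
        apply key 1 1 H.one_mem
        simp
      rw [← this, QuotientGroup.mk_one]
    map_mul' := by
      intro q q'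
      have h1 : QuotientGroup.mk (repn q * repn q') = αf (q * q') := by
        apply key (q * q') (repn q * repn q') (H.mul_mem (hrepH q) (hrepH q'))
        simp only [Subgroup.coe_mul, QuotientGroup.mk_mul, hrepeq]
        exact congrArg₂ (· * ·) (hrepeq q) (hrepeq q')
      show αf (q * q') = αf q * αf q'
      rw [← h1, QuotientGroup.mk_mul] }
  have hαcoe : ∀ q, α' q = αf q := fun _ => rfl
  have hcomp' : ∀ (q : R') (g : (Subgroup.normalizer (L' : Set G))),
      (QuotientGroup.mk g : (Subgroup.normalizer (L' : Set G)) ⧸ L'.subgroupOf (Subgroup.normalizer (L' : Set G))) = α' q →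
      (QuotientGroup.mk (g : G) : G ⧸ N) = (q : G ⧸ N) := by
    intro q g he
    rw [hαcoe] at he
    have h2 : g⁻¹ * repn q ∈ L'.subgroupOf (Subgroup.normalizer (L' : Set G)) := QuotientGroup.eq.mp he
    have h3 : (g : G)⁻¹ * rep q ∈ N := (Subgroup.mem_inf.mp (Subgroup.mem_subgroupOf.mp h2)).2
    have h4 : (QuotientGroup.mk (g : G) : G ⧸ N) = QuotientGroup.mk (rep q) :=
      QuotientGroup.eq.mpr h3
    rw [h4, hrepeq]
  refine ⟨R', L', inf_le_right, α', ?_, hcomp', rfl, rfl, ?_⟩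
  · intro q q' he
    have e1 := hcomp' q' (repn q) (by rw [← he, hαcoe])
    have e2 : (QuotientGroup.mk (rep q) : G ⧸ N) = (q : G ⧸ N) := hrepeq q
    exact Subtype.ext (e2 ▸ e1)
  · intro q g
    constructor
    · rintro ⟨hg, he⟩
      rw [hαcoe]
      exact key q g hg he
    · intro he
      refine ⟨?_, hcomp' q g he⟩
      rw [hαcoe] at he
      have h2 : g⁻¹ * repn q ∈ L'.subgroupOf (Subgroup.normalizer (L' : Set G)) := QuotientGroup.eq.mp he
      have h3 : (g : G)⁻¹ * rep q ∈ H := (Subgroup.mem_inf.mp (Subgroup.mem_subgroupOf.mp h2)).1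
      have h5 : (g : G) = rep q * ((g : G)⁻¹ * rep q)⁻¹ := by group
      rw [h5]
      exact H.mul_mem (hrepH q) (H.inv_mem h3)


/-- Goursat lemma for group extensions `1 → N → G → Q → 1` with `Q = G ⧸ N`:
subgroups `H ≤ G` correspond bijectively to triples `(Q_H, N_H, α_H)` where
`Q_H ≤ Q`, `N_H ≤ N`, and `α_H : Q_H → N_G(N_H)/N_H` is an (injective)
homomorphism whose value at `q` is a coset contained in the preimage of `q`.
The first conjunct says every such triple determines a unique subgroup `H`;
the second says every subgroup `H` arises from such a triple. -/
theorem goursat_extension {G : Type*} [Group G] (N : Subgroup G) [N.Normal]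
    (R : Subgroup (G ⧸ N)) (L : Subgroup G) (hLN : L ≤ N)
    (α : R →* (Subgroup.normalizer (L : Set G)) ⧸ L.subgroupOf (Subgroup.normalizer (L : Set G)))
    (hinj : Function.Injective α)
    (hcomp : ∀ (q : R) (g : (Subgroup.normalizer (L : Set G))),
      (QuotientGroup.mk g : (Subgroup.normalizer (L : Set G)) ⧸ L.subgroupOf (Subgroup.normalizer (L : Set G))) = α q →
      (QuotientGroup.mk (g : G) : G ⧸ N) = (q : G ⧸ N)) :
    (∃! H : Subgroup G,
      H ⊓ N = L ∧ Subgroup.map (QuotientGroup.mk' N) H = R ∧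
      ∀ (q : R) (g : (Subgroup.normalizer (L : Set G))),
        (((g : G) ∈ H) ∧ (QuotientGroup.mk (g : G) : G ⧸ N) = (q : G ⧸ N)) ↔
          (QuotientGroup.mk g : (Subgroup.normalizer (L : Set G)) ⧸ L.subgroupOf (Subgroup.normalizer (L : Set G))) = α q) ∧
    (∀ H : Subgroup G,
      ∃ (R' : Subgroup (G ⧸ N)) (L' : Subgroup G) (_ : L' ≤ N)
        (α' : R' →* (Subgroup.normalizer (L' : Set G)) ⧸ L'.subgroupOf (Subgroup.normalizer (L' : Set G))),
        Function.Injective α' ∧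
        (∀ (q : R') (g : (Subgroup.normalizer (L' : Set G))),
          (QuotientGroup.mk g : (Subgroup.normalizer (L' : Set G)) ⧸ L'.subgroupOf (Subgroup.normalizer (L' : Set G))) = α' q →
          (QuotientGroup.mk (g : G) : G ⧸ N) = (q : G ⧸ N)) ∧
        H ⊓ N = L' ∧ Subgroup.map (QuotientGroup.mk' N) H = R' ∧
        ∀ (q : R') (g : (Subgroup.normalizer (L' : Set G))),
          (((g : G) ∈ H) ∧ (QuotientGroup.mk (g : G) : G ⧸ N) = (q : G ⧸ N)) ↔
            (QuotientGroup.mk g : (Subgroup.normalizer (L' : Set G)) ⧸ L'.subgroupOf (Subgroup.normalizer (L' : Set G))) = α' q) := by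
  refine ⟨?_, fun H => goursat_part2 N H⟩
  -- Part 1: construct the subgroup S from the triple
  set S : Subgroup G := {
    carrier := {g : G | ∃ (q : R) (h : (Subgroup.normalizer (L : Set G))), ((h : G) = g ∧
      (QuotientGroup.mk h : (Subgroup.normalizer (L : Set G)) ⧸ L.subgroupOf (Subgroup.normalizer (L : Set G))) = α q)}
    one_mem' := ⟨1, 1, rfl, by rw [QuotientGroup.mk_one, map_one]⟩
    mul_mem' := by
      rintro a b ⟨q, h, rfl, e⟩ ⟨q', h', rfl, e'⟩
      exact ⟨q * q', h * h', rfl, by rw [QuotientGroup.mk_mul, e, e', map_mul]⟩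
    inv_mem' := by
      rintro a ⟨q, h, rfl, e⟩
      exact ⟨q⁻¹, h⁻¹, rfl, by rw [QuotientGroup.mk_inv, e, map_inv]⟩ } with hSdef
  have hmemS : ∀ g : G, g ∈ S ↔ ∃ (q : R) (h : (Subgroup.normalizer (L : Set G))), ((h : G) = g ∧
      (QuotientGroup.mk h : (Subgroup.normalizer (L : Set G)) ⧸ L.subgroupOf (Subgroup.normalizer (L : Set G))) = α q) := by
    intro g; rfl
  have hSN : S ⊓ N = L := by
    ext x
    simp only [Subgroup.mem_inf]
    constructor
    · rintro ⟨hxS, hxN⟩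
      obtain ⟨q, h, rfl, e⟩ := (hmemS _).mp hxS
      have h1 := hcomp q h e
      have h2 : ((h : G) : G ⧸ N) = 1 := (QuotientGroup.eq_one_iff _).mpr hxN
      have h4 : q = 1 := Subtype.ext (by rw [← h1, h2]; rfl)
      rw [h4, map_one] at e
      exact Subgroup.mem_subgroupOf.mp ((QuotientGroup.eq_one_iff _).mp e)
    · intro hx
      refine ⟨(hmemS _).mpr ⟨1, ⟨x, Subgroup.le_normalizer hx⟩, rfl, ?_⟩, hLN hx⟩
      rw [map_one]
      exact (QuotientGroup.eq_one_iff _).mpr (Subgroup.mem_subgroupOf.mpr hx)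
  have hmap : Subgroup.map (QuotientGroup.mk' N) S = R := by
    ext x
    rw [Subgroup.mem_map]
    constructor
    · rintro ⟨g, hgS, rfl⟩
      obtain ⟨q, h, rfl, e⟩ := (hmemS _).mp hgS
      have h1 := hcomp q h e
      show (QuotientGroup.mk ((h : G)) : G ⧸ N) ∈ R
      rw [h1]
      exact q.2
    · intro hx
      obtain ⟨h, hh⟩ := QuotientGroup.mk_surjective (α ⟨x, hx⟩)
      exact ⟨(h : G), (hmemS _).mpr ⟨⟨x, hx⟩, h, rfl, hh⟩, hcomp ⟨x, hx⟩ h hh⟩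
  have hiff : ∀ (q : R) (g : (Subgroup.normalizer (L : Set G))),
      (((g : G) ∈ S) ∧ (QuotientGroup.mk (g : G) : G ⧸ N) = (q : G ⧸ N)) ↔
        (QuotientGroup.mk g : (Subgroup.normalizer (L : Set G)) ⧸ L.subgroupOf (Subgroup.normalizer (L : Set G))) = α q := by
    intro q g
    constructor
    · rintro ⟨hgS, hgq⟩
      obtain ⟨q', h, hh, e⟩ := (hmemS _).mp hgS
      have hhg : h = g := Subtype.ext hh
      subst hhg
      have h1 := hcomp q' h e
      have hqq : q' = q := Subtype.ext (by rw [← h1, hgq])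
      rw [← hqq]
      exact e
    · intro e
      exact ⟨(hmemS _).mpr ⟨q, g, rfl, e⟩, hcomp q g e⟩
  refine ⟨S, ⟨hSN, hmap, hiff⟩, ?_⟩
  rintro H ⟨h1, h2, h3⟩
  have hnorm : H ≤ (Subgroup.normalizer (L : Set G)) := by rw [← h1]; exact goursat_norm_aux N H
  ext g
  constructor
  · intro hg
    have hgR : (QuotientGroup.mk g : G ⧸ N) ∈ R := by
      rw [← h2]; exact ⟨g, hg, rfl⟩
    have := (h3 ⟨QuotientGroup.mk g, hgR⟩ ⟨g, hnorm hg⟩).mp ⟨hg, rfl⟩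
    exact (hmemS _).mpr ⟨⟨QuotientGroup.mk g, hgR⟩, ⟨g, hnorm hg⟩, rfl, this⟩
  · intro hgS
    obtain ⟨q, h, rfl, e⟩ := (hmemS _).mp hgS
    exact ((h3 q h).mpr e).1
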